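/- arXiv:2504.21098 — 2 statements merged into one kernel-verified Lean document; each statement's English description precedes it below -/
import Mathlib

section
/- Fix an integer l ≥ 1 and a real κ > 0. For each integer N, consider the sum S_N := Σ_{k ∈ ℕ^{2l-1}} (Σk + l + κ)/(N + κ)^{Σk + l} · ∏_{i=0}^{Σk - 1}(N - l - i), where Σk := Σ_{i=1}^{2l-1} k_i, an empty product equals 1, and all terms with Σk > N - l vanish because the product contains a zero factor. Then lim_{N→∞} S_N = 1 / c_l, where c_l := ∏_{i=1}^{l-1}(2i - 1). -/
open Filter Finset

/-- Hockey stick in the form we need. -/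
lemma hockey (m u : ℕ) : ∑ s ∈ range (u + 1), (s + m).choose m = (u + m + 1).choose (m + 1) := by
  have h := Nat.sum_Icc_choose (u + m) m
  rw [← Finset.Ico_add_one_right_eq_Icc] at h
  rw [← h, Finset.sum_Ico_eq_sum_range (fun i => i.choose m) m (u + m + 1)]
  · apply Finset.sum_congr
    · congr 1; omega
    · intro s _; congr 1; omega

/-- rearrangement of the double sum -/
lemma rearr (m n : ℕ) (f : ℕ → ℝ) (hf : ∀ s, n < s → f s = 0) :
    ∑ t ∈ range (n + 1), ∑ s ∈ range (n + 1), ((s + m).choose m : ℝ) * f (t + s)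
      = ∑ u ∈ range (n + 1), ((u + m + 1).choose (m + 1) : ℝ) * f u := by
  rw [Finset.sum_comm]
  have step1 : ∀ s ∈ range (n + 1),
      ∑ t ∈ range (n + 1), ((s + m).choose m : ℝ) * f (t + s)
        = ∑ u ∈ Ico s (n + 1), ((s + m).choose m : ℝ) * f u := by
    intro s hs
    rw [Finset.mem_range] at hs
    have h1 : ∑ u ∈ Ico s (s + (n + 1)), ((s + m).choose m : ℝ) * f u
        = ∑ t ∈ range (n + 1), ((s + m).choose m : ℝ) * f (t + s) := by
      rw [Finset.sum_Ico_eq_sum_range]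
      apply Finset.sum_congr (by congr 1; omega)
      intro t _; rw [add_comm s t]
    rw [← h1, ← Finset.sum_Ico_consecutive (fun u => ((s + m).choose m : ℝ) * f u)
        (by omega : s ≤ n + 1) (by omega : n + 1 ≤ s + (n + 1))]
    have h2 : ∑ u ∈ Ico (n + 1) (s + (n + 1)), ((s + m).choose m : ℝ) * f u = 0 := by
      apply Finset.sum_eq_zero
      intro u hu
      rw [Finset.mem_Ico] at hu
      rw [hf u (by omega), mul_zero]
    rw [h2, add_zero]
  rw [Finset.sum_congr rfl step1]
  rw [Finset.sum_comm' (t' := range (n + 1)) (s' := fun u => range (u + 1))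
    (by intro s u; simp only [Finset.mem_range, Finset.mem_Ico]; omega)]
  apply Finset.sum_congr rfl
  intro u _
  rw [← Finset.sum_mul, ← Nat.cast_sum, hockey]

/-- Stars and bars for tsum with finitely supported weight -/
lemma sb_aux (m n : ℕ) (f : ℕ → ℝ) (hf : ∀ s, n < s → f s = 0) :
    ∑' k : Fin (m + 1) → ℕ, f (∑ i, k i)
      = ∑ s ∈ range (n + 1), ((s + m).choose m : ℝ) * f s := by
  induction m generalizing f with
  | zero =>
    have h1 : ∑' k : Fin 1 → ℕ, f (∑ i, k i) = ∑' t : ℕ, f t := by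
      rw [← (Equiv.funUnique (Fin 1) ℕ).symm.tsum_eq (fun k : Fin 1 → ℕ => f (∑ i, k i))]
      apply tsum_congr
      intro t
      simp [Equiv.funUnique]
    rw [h1, tsum_eq_sum (s := range (n + 1))
      (fun s hs => hf s (by simpa using Nat.not_lt.mp (fun h => hs (Finset.mem_range.mpr h))))]
    apply Finset.sum_congr rfl
    intro s _
    simp
  | succ m ih =>
    classical
    set e : (ℕ × (Fin (m + 1) → ℕ)) ≃ (Fin (m + 2) → ℕ) :=
      Fin.consEquiv (fun _ : Fin (m + 2) => ℕ) with he
    have h0 : ∑' k : Fin (m + 2) → ℕ, f (∑ i, k i)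
        = ∑' p : ℕ × (Fin (m + 1) → ℕ), f (p.1 + ∑ i, p.2 i) := by
      rw [← e.tsum_eq (fun k : Fin (m + 2) → ℕ => f (∑ i, k i))]
      apply tsum_congr
      intro p
      congr 1
      rw [Fin.sum_univ_succ]
      simp [he, Fin.consEquiv]
    rw [h0]
    have hsumm : Summable (fun p : ℕ × (Fin (m + 1) → ℕ) => f (p.1 + ∑ i, p.2 i)) := by
      apply summable_of_ne_finset_zero
        (s := (range (n + 1)) ×ˢ (Fintype.piFinset fun _ : Fin (m + 1) => range (n + 1)))
      intro p hp
      rw [Finset.mem_product] at hp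
      push_neg at hp
      by_cases h1 : p.1 ∈ range (n + 1)
      · have h2 := hp h1
        rw [Fintype.mem_piFinset] at h2
        push_neg at h2
        obtain ⟨i, hi⟩ := h2
        rw [Finset.mem_range, Nat.not_lt] at hi
        apply hf
        calc n < n + 1 := by omega
          _ ≤ p.2 i := hi
          _ ≤ ∑ j, p.2 j := Finset.single_le_sum (fun j _ => Nat.zero_le _) (Finset.mem_univ i)
          _ ≤ p.1 + ∑ j, p.2 j := by omega
      · rw [Finset.mem_range, Nat.not_lt] at h1
        apply hf
        omega
    rw [Summable.tsum_prod hsumm]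
    have hinner : ∀ t : ℕ, ∑' k : Fin (m + 1) → ℕ, f (t + ∑ i, k i)
        = ∑ s ∈ range (n + 1), ((s + m).choose m : ℝ) * f (t + s) := by
      intro t
      exact ih (fun u => f (t + u)) (fun s hs => hf _ (by omega))
    calc ∑' t : ℕ, ∑' k : Fin (m + 1) → ℕ, f (t + ∑ i, k i)
        = ∑' t : ℕ, ∑ s ∈ range (n + 1), ((s + m).choose m : ℝ) * f (t + s) :=
          tsum_congr hinner
      _ = ∑ t ∈ range (n + 1), ∑ s ∈ range (n + 1), ((s + m).choose m : ℝ) * f (t + s) := by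
          apply tsum_eq_sum
          intro t ht
          rw [Finset.mem_range, Nat.not_lt] at ht
          apply Finset.sum_eq_zero
          intro s _
          rw [hf (t + s) (by omega), mul_zero]
      _ = ∑ u ∈ range (n + 1), ((u + m + 1).choose (m + 1) : ℝ) * f u := rearr m n f hf

noncomputable def Vf (l : ℕ) (κ : ℝ) (N s : ℕ) : ℝ :=
  ∏ j ∈ range s, (((N : ℝ) - l - j) / ((N : ℝ) + κ))

noncomputable def Ff (l : ℕ) (κ : ℝ) (N p : ℕ) : ℝ :=
  ∑ s ∈ range (N + 1), ((s + p).choose p : ℝ) * Vf l κ N s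

lemma Apos {κ : ℝ} (hκ : 0 < κ) (N : ℕ) : (0 : ℝ) < (N : ℝ) + κ := by positivity

lemma Vf_zero (l : ℕ) (κ : ℝ) (N : ℕ) : Vf l κ N 0 = 1 := by simp [Vf]

lemma Vf_succ (l : ℕ) (κ : ℝ) (N s : ℕ) :
    Vf l κ N (s + 1) = Vf l κ N s * (((N : ℝ) - l - s) / ((N : ℝ) + κ)) := by
  rw [Vf, Finset.prod_range_succ]; rfl

lemma Vf_eq_zero {l N s : ℕ} {κ : ℝ} (hN : l ≤ N) (hs : N - l < s) : Vf l κ N s = 0 := by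
  apply Finset.prod_eq_zero (Finset.mem_range.mpr hs)
  have : ((N : ℝ) - l - (N - l : ℕ)) = 0 := by rw [Nat.cast_sub hN]; ring
  rw [this, zero_div]

lemma Vf_nonneg {l N : ℕ} {κ : ℝ} (hκ : 0 < κ) (hN : l ≤ N) (s : ℕ) : 0 ≤ Vf l κ N s := by
  rcases le_or_gt s (N - l) with h | h
  · apply Finset.prod_nonneg
    intro j hj
    rw [Finset.mem_range] at hj
    have hj2 : (j : ℝ) ≤ (N : ℝ) - l := by
      have : (j : ℝ) ≤ ((N - l : ℕ) : ℝ) := by exact_mod_cast Nat.le_of_lt_succ (by omega)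
      rwa [Nat.cast_sub hN] at this
    have hA := Apos hκ N
    apply div_nonneg (by linarith) (le_of_lt hA)
  · rw [Vf_eq_zero hN h]

lemma sum_range_id_real (s : ℕ) :
    ∑ j ∈ range s, ((j : ℝ) + 1) = s * (s + 1) / 2 := by
  induction s with
  | zero => simp
  | succ s ih => rw [Finset.sum_range_succ, ih]; push_cast; ring

lemma Vf_le_exp {l N : ℕ} {κ : ℝ} (hl : 1 ≤ l) (hκ : 0 < κ) (hN : l ≤ N) (s : ℕ) :
    Vf l κ N s ≤ Real.exp (-(s : ℝ) ^ 2 / (2 * ((N : ℝ) + κ))) := by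
  rcases le_or_gt s (N - l) with h | h
  · have hA := Apos hκ N
    have step : Vf l κ N s ≤ ∏ j ∈ range s, Real.exp (-((j : ℝ) + 1) / ((N : ℝ) + κ)) := by
      apply Finset.prod_le_prod
      · intro j hj
        rw [Finset.mem_range] at hj
        have hj2 : (j : ℝ) ≤ (N : ℝ) - l := by
          have : (j : ℝ) ≤ ((N - l : ℕ) : ℝ) := by exact_mod_cast Nat.le_of_lt_succ (by omega)
          rwa [Nat.cast_sub hN] at this
        apply div_nonneg (by linarith) (le_of_lt hA)
      · intro j hj
        have hlr : (1 : ℝ) ≤ l := by exact_mod_cast hl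
        have h1 : ((N : ℝ) - l - j) / ((N : ℝ) + κ) ≤ 1 - ((j : ℝ) + 1) / ((N : ℝ) + κ) := by
          rw [div_le_iff₀ hA]
          field_simp
          linarith
        have h2 : 1 - ((j : ℝ) + 1) / ((N : ℝ) + κ) ≤ Real.exp (-((j : ℝ) + 1) / ((N : ℝ) + κ)) := by
          have := Real.add_one_le_exp (-((j : ℝ) + 1) / ((N : ℝ) + κ))
          rw [neg_div] at this ⊢
          linarith
        exact le_trans h1 h2
    rw [← Real.exp_sum] at step
    apply le_trans step
    apply Real.exp_le_exp.mpr
    have : ∑ j ∈ range s, -((j : ℝ) + 1) / ((N : ℝ) + κ)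
        = -(∑ j ∈ range s, ((j : ℝ) + 1)) / ((N : ℝ) + κ) := by
      rw [← Finset.sum_div, ← Finset.sum_neg_distrib]
    rw [this, sum_range_id_real]
    rw [div_le_div_iff₀ (Apos hκ N) (by positivity)]
    have hs0 : (0 : ℝ) ≤ s := Nat.cast_nonneg s
    nlinarith [Apos hκ N]
  · rw [Vf_eq_zero hN h]
    positivity

lemma Vf_def (l : ℕ) (κ : ℝ) (N s : ℕ) :
    Vf l κ N s = ∏ j ∈ range s, (((N : ℝ) - l - j) / ((N : ℝ) + κ)) := rfl

lemma exp_sq_le {A : ℝ} (hA : 1 ≤ A) (s : ℕ) :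
    Real.exp (-(s : ℝ) ^ 2 / (2 * A)) ≤ Real.exp (1 / 2) * Real.exp (-1 / (2 * Real.sqrt A)) ^ s := by
  have hA0 : 0 < A := lt_of_lt_of_le one_pos hA
  have hb : 0 < Real.sqrt A := Real.sqrt_pos.mpr hA0
  set B := Real.sqrt A with hB
  have hb2 : B ^ 2 = A := Real.sq_sqrt hA0.le
  rw [← hb2, ← Real.exp_nat_mul, ← Real.exp_add]
  apply Real.exp_le_exp.mpr
  have key : (s : ℝ) * B ≤ ((s : ℝ) ^ 2 + B ^ 2) / 2 := by
    nlinarith [sq_nonneg ((s : ℝ) - B)]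
  have h1 : (s : ℝ) * (-1 / (2 * B)) = -((s : ℝ) * B) / (2 * B ^ 2) := by
    field_simp
  rw [h1, show (1:ℝ)/2 + -((s : ℝ) * B) / (2 * B ^ 2) = (B ^ 2 - (s : ℝ) * B)/(2 * B ^ 2) by
    field_simp; ring]
  rw [div_le_div_iff₀ (by positivity) (by positivity)]
  nlinarith [key, hb]

lemma F_nonneg {l N : ℕ} {κ : ℝ} (hκ : 0 < κ) (hN : l ≤ N) (p : ℕ) : 0 ≤ Ff l κ N p := by
  apply Finset.sum_nonneg
  intro s _
  exact mul_nonneg (Nat.cast_nonneg _) (Vf_nonneg hκ hN s)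

lemma F0_bound {l N : ℕ} {κ : ℝ} (hl : 1 ≤ l) (hκ : 0 < κ) (hN : l ≤ N) :
    Ff l κ N 0 ≤ 4 * Real.exp (1 / 2) * Real.sqrt ((N : ℝ) + κ) := by
  have hA : (1 : ℝ) ≤ (N : ℝ) + κ := by
    have : (1 : ℝ) ≤ (N : ℝ) := by exact_mod_cast le_trans hl hN
    linarith
  have hA0 : (0 : ℝ) < (N : ℝ) + κ := by linarith
  set b := Real.sqrt ((N : ℝ) + κ) with hbdef
  have hb1 : 1 ≤ b := Real.one_le_sqrt.mpr hA
  have hb0 : 0 < b := by linarith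
  set q := Real.exp (-1 / (2 * b)) with hq
  have hqlt : q < 1 := by
    rw [hq]
    have hneg : -1/(2*b) < 0 := div_neg_of_neg_of_pos (by norm_num) (by positivity)
    calc Real.exp (-1/(2*b)) < Real.exp 0 := Real.exp_lt_exp.mpr hneg
      _ = 1 := Real.exp_zero
  have hq0 : 0 < q := Real.exp_pos _
  have step1 : Ff l κ N 0 ≤ Real.exp (1/2) * ∑ s ∈ range (N + 1), q ^ s := by
    rw [Ff, Finset.mul_sum]
    apply Finset.sum_le_sum
    intro s _
    simp only [Nat.choose_zero_right, Nat.cast_one, one_mul, add_zero]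
    calc Vf l κ N s ≤ Real.exp (-(s : ℝ) ^ 2 / (2 * ((N : ℝ) + κ))) := Vf_le_exp hl hκ hN s
      _ ≤ Real.exp (1/2) * q ^ s := exp_sq_le hA s
  have geom : ∑ s ∈ range (N + 1), q ^ s ≤ 4 * b := by
    have hgm := geom_sum_mul q (N + 1)
    have h1q : 0 < 1 - q := by linarith
    have hle : (∑ s ∈ range (N + 1), q ^ s) * (1 - q) ≤ 1 := by
      have : (∑ s ∈ range (N + 1), q ^ s) * (1 - q) = 1 - q ^ (N + 1) := by
        have := geom_sum_mul q (N + 1); nlinarith [this]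
      rw [this]
      have : 0 < q ^ (N + 1) := pow_pos hq0 _
      linarith
    have hlow : 1 / (4 * b) ≤ 1 - q := by
      -- 1 - exp(-x) ≥ x/(1+x) ≥ x/2 with x = 1/(2b) ≤ 1/2
      set x := 1 / (2 * b) with hx
      have hx0 : 0 < x := by positivity
      have hx1 : x ≤ 1 := by
        rw [hx]
        rw [div_le_one (by positivity)]
        linarith
      have hexp : Real.exp (-x) ≤ 1 / (1 + x) := by
        rw [le_div_iff₀ (by positivity)]
        have h := Real.add_one_le_exp x
        have hpos := Real.exp_pos (-x)
        have : Real.exp (-x) * Real.exp x = 1 := by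
          rw [← Real.exp_add]; simp
        nlinarith
      have hqx : q = Real.exp (-x) := by rw [hq, hx]; congr 1; field_simp
      have h2 : x / 2 ≤ x / (1 + x) := by
        apply div_le_div_of_nonneg_left hx0.le (by positivity)
        linarith
      have h3 : x / (1 + x) ≤ 1 - q := by
        rw [hqx]
        have : 1 - 1 / (1 + x) = x / (1 + x) := by field_simp; ring
        linarith [hexp]
      have : 1 / (4 * b) = x / 2 := by rw [hx]; field_simp; ring
      linarith
    calc ∑ s ∈ range (N + 1), q ^ s ≤ 1 / (1 - q) := by
          rw [le_div_iff₀ h1q]; exact hle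
      _ ≤ 4 * b := by
          rw [div_le_iff₀ h1q]
          calc (1 : ℝ) = (4 * b) * (1 / (4 * b)) := by field_simp
            _ ≤ (4 * b) * (1 - q) := by
                apply mul_le_mul_of_nonneg_left hlow (by positivity)
  calc Ff l κ N 0 ≤ Real.exp (1/2) * ∑ s ∈ range (N + 1), q ^ s := step1
    _ ≤ Real.exp (1/2) * (4 * b) := by
        apply mul_le_mul_of_nonneg_left geom (Real.exp_pos _).le
    _ = 4 * Real.exp (1/2) * b := by ring

-- telescoping core identity
lemma tele {l N : ℕ} {κ : ℝ} (hκ : 0 < κ) (s : ℕ) :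
    ((s : ℝ) + l + κ) * Vf l κ N s = ((N : ℝ) + κ) * (Vf l κ N s - Vf l κ N (s + 1)) := by
  rw [Vf_succ]
  have hA := Apos hκ N
  field_simp
  ring

/-- q = -1 master identity -/
lemma M0 {l N : ℕ} {κ : ℝ} (hκ : 0 < κ) (hN : l ≤ N) :
    ∑ s ∈ range (N + 1), ((s : ℝ) + l + κ) * Vf l κ N s = (N : ℝ) + κ := by
  have : ∀ s ∈ range (N + 1), ((s : ℝ) + l + κ) * Vf l κ N s
      = ((N : ℝ) + κ) * (Vf l κ N s - Vf l κ N (s + 1)) := fun s _ => tele hκ s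
  rw [Finset.sum_congr rfl this, ← Finset.mul_sum,
    Finset.sum_range_sub' (fun s => Vf l κ N s) (N + 1)]
  rw [Vf_zero, Vf_eq_zero hN (by omega), sub_zero, mul_one]

/-- shift lemma -/
lemma shift {l N : ℕ} {κ : ℝ} (hN : l ≤ N) (q : ℕ) :
    ∑ s ∈ range (N + 1), ((s + q + 1).choose (q + 1) : ℝ) * Vf l κ N (s + 1)
      = ∑ s ∈ range (N + 1), ((s + q).choose (q + 1) : ℝ) * Vf l κ N s := by
  have h1 : ∑ s ∈ range (N + 2), ((s + q).choose (q + 1) : ℝ) * Vf l κ N s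
      = ∑ s ∈ range (N + 1), ((s + 1 + q).choose (q + 1) : ℝ) * Vf l κ N (s + 1)
        + ((0 + q).choose (q + 1) : ℝ) * Vf l κ N 0 :=
    Finset.sum_range_succ' (fun s => ((s + q).choose (q + 1) : ℝ) * Vf l κ N s) (N + 1)
  have h2 : ∑ s ∈ range (N + 2), ((s + q).choose (q + 1) : ℝ) * Vf l κ N s
      = ∑ s ∈ range (N + 1), ((s + q).choose (q + 1) : ℝ) * Vf l κ N s
        + ((N + 1 + q).choose (q + 1) : ℝ) * Vf l κ N (N + 1) :=
    Finset.sum_range_succ (fun s => ((s + q).choose (q + 1) : ℝ) * Vf l κ N s) (N + 1)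
  rw [Vf_eq_zero hN (by omega), mul_zero, add_zero] at h2
  rw [Nat.zero_add, Nat.choose_eq_zero_of_lt (by omega), Nat.cast_zero, zero_mul, add_zero] at h1
  rw [← h2, h1]
  apply Finset.sum_congr rfl
  intro s _
  rw [show s + 1 + q = s + q + 1 by omega]

/-- master identity -/
lemma M {l N : ℕ} {κ : ℝ} (hκ : 0 < κ) (hN : l ≤ N) (q : ℕ) :
    ∑ s ∈ range (N + 1), ((s + q + 1).choose (q + 1) : ℝ) * (((s : ℝ) + l + κ) * Vf l κ N s)
      = ((N : ℝ) + κ) * Ff l κ N q := by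
  have step1 : ∀ s ∈ range (N + 1), ((s + q + 1).choose (q + 1) : ℝ) * (((s : ℝ) + l + κ) * Vf l κ N s)
      = ((N : ℝ) + κ) * (((s + q + 1).choose (q + 1) : ℝ) * Vf l κ N s
          - ((s + q + 1).choose (q + 1) : ℝ) * Vf l κ N (s + 1)) := by
    intro s _
    rw [tele hκ]
    ring
  rw [Finset.sum_congr rfl step1, ← Finset.mul_sum]
  congr 1
  rw [Finset.sum_sub_distrib, shift hN q]
  rw [← Finset.sum_sub_distrib, Ff]
  apply Finset.sum_congr rfl
  intro s _
  rw [← sub_mul]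
  congr 1
  have hpascal : ((s + q + 1).choose (q + 1) : ℕ) = (s + q).choose q + (s + q).choose (q + 1) :=
    Nat.choose_succ_succ (s + q) q
  have : ((s + q + 1).choose (q + 1) : ℝ)
      = ((s + q).choose q : ℝ) + ((s + q).choose (q + 1) : ℝ) := by exact_mod_cast hpascal
  rw [this]; ring

/-- base recursion -/
lemma REC0 {l N : ℕ} {κ : ℝ} (hκ : 0 < κ) (hN : l ≤ N) :
    (N : ℝ) + κ = Ff l κ N 1 + ((l : ℝ) + κ - 1) * Ff l κ N 0 := by
  rw [← M0 hκ hN, Ff, Ff, Finset.mul_sum, ← Finset.sum_add_distrib]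
  apply Finset.sum_congr rfl
  intro s _
  rw [Nat.choose_one_right, Nat.choose_zero_right]
  push_cast
  ring

/-- main recursion -/
lemma REC {l N : ℕ} {κ : ℝ} (hκ : 0 < κ) (hN : l ≤ N) (q : ℕ) :
    ((N : ℝ) + κ) * Ff l κ N q
      = ((q : ℝ) + 2) * Ff l κ N (q + 2) + ((l : ℝ) + κ - ((q : ℝ) + 2)) * Ff l κ N (q + 1) := by
  rw [← M hκ hN q, Ff, Ff, Finset.mul_sum, Finset.mul_sum, ← Finset.sum_add_distrib]
  apply Finset.sum_congr rfl
  intro s _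
  have hid : (s + q + 2) * ((s + q + 1).choose (q + 1)) = ((s + q + 2).choose (q + 2)) * (q + 2) :=
    Nat.add_one_mul_choose_eq (s + q + 1) (q + 1)
  have hidR : ((s : ℝ) + q + 2) * ((s + q + 1).choose (q + 1) : ℝ)
      = ((s + q + 2).choose (q + 2) : ℝ) * ((q : ℝ) + 2) := by exact_mod_cast hid
  have e1 : s + (q + 2) = s + q + 2 := by omega
  have e2 : s + (q + 1) = s + q + 1 := by omega
  rw [e1, e2]
  linear_combination Vf l κ N s * hidR

section
variable {l : ℕ} {κ : ℝ}

lemma sqrtA_one_le (hl : 1 ≤ l) (hκ : 0 < κ) {N : ℕ} (hN : l ≤ N) :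
    1 ≤ Real.sqrt ((N : ℝ) + κ) := by
  apply Real.one_le_sqrt.mpr
  have : (1 : ℝ) ≤ (N : ℝ) := by exact_mod_cast le_trans hl hN
  linarith

lemma sqrtA_sq (hκ : 0 < κ) (N : ℕ) :
    Real.sqrt ((N : ℝ) + κ) ^ 2 = (N : ℝ) + κ := Real.sq_sqrt (Apos hκ N).le

lemma growth_pair (hl : 1 ≤ l) (hκ : 0 < κ) (p : ℕ) :
    (∃ C, 0 < C ∧ ∀ N, l ≤ N → Ff l κ N p ≤ C * (Real.sqrt ((N : ℝ) + κ)) ^ (p + 1)) ∧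
    (∃ C, 0 < C ∧ ∀ N, l ≤ N → Ff l κ N (p + 1) ≤ C * (Real.sqrt ((N : ℝ) + κ)) ^ (p + 2)) := by
  induction p with
  | zero =>
    constructor
    · exact ⟨4 * Real.exp (1 / 2), by positivity, fun N hN => by
        simpa [pow_one] using F0_bound hl hκ hN⟩
    · refine ⟨1, one_pos, fun N hN => ?_⟩
      have h0 := REC0 hκ hN
      have hlr : (1 : ℝ) ≤ l := by exact_mod_cast hl
      have hF0 := F_nonneg hκ hN 0
      have : Ff l κ N 1 ≤ (N : ℝ) + κ := by nlinarith
      rw [one_mul, sqrtA_sq hκ N]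
      exact this
  | succ p ih =>
    obtain ⟨⟨C1, hC1, h1⟩, ⟨C2, hC2, h2⟩⟩ := ih
    refine ⟨⟨C2, hC2, h2⟩, ⟨C1 + |(l : ℝ) + κ - ((p : ℝ) + 2)| * C2, by positivity, ?_⟩⟩
    intro N hN
    set b := Real.sqrt ((N : ℝ) + κ) with hb
    have hb1 : 1 ≤ b := sqrtA_one_le hl hκ hN
    have hb0 : 0 < b := lt_of_lt_of_le one_pos hb1
    have hbsq : b ^ 2 = (N : ℝ) + κ := sqrtA_sq hκ N
    have hrec := REC hκ hN p
    have hF2 := F_nonneg hκ hN (p + 2)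
    have hF1 := F_nonneg hκ hN (p + 1)
    set c := (l : ℝ) + κ - ((p : ℝ) + 2) with hc
    have key : ((p : ℝ) + 2) * Ff l κ N (p + 2)
        ≤ (C1 + |c| * C2) * b ^ (p + 3) := by
      have e1 : ((p : ℝ) + 2) * Ff l κ N (p + 2) = ((N : ℝ) + κ) * Ff l κ N p - c * Ff l κ N (p + 1) := by
        rw [hrec]; ring
      rw [e1]
      have t1 : ((N : ℝ) + κ) * Ff l κ N p ≤ C1 * b ^ (p + 3) := by
        calc ((N : ℝ) + κ) * Ff l κ N p ≤ ((N : ℝ) + κ) * (C1 * b ^ (p + 1)) := by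
              apply mul_le_mul_of_nonneg_left (h1 N hN) (Apos hκ N).le
          _ = C1 * b ^ (p + 3) := by rw [← hbsq]; ring
      have t2 : -(c * Ff l κ N (p + 1)) ≤ |c| * (C2 * b ^ (p + 2)) := by
        calc -(c * Ff l κ N (p + 1)) ≤ |c| * Ff l κ N (p + 1) := by
              rw [neg_mul_eq_neg_mul]
              apply mul_le_mul_of_nonneg_right (neg_le_abs c) hF1
          _ ≤ |c| * (C2 * b ^ (p + 2)) := by
              apply mul_le_mul_of_nonneg_left (h2 N hN) (abs_nonneg c)
      have t3 : |c| * (C2 * b ^ (p + 2)) ≤ |c| * C2 * b ^ (p + 3) := by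
        rw [mul_assoc]
        apply mul_le_mul_of_nonneg_left _ (abs_nonneg c)
        apply mul_le_mul_of_nonneg_left _ hC2.le
        apply pow_le_pow_right₀ hb1 (by omega)
      nlinarith
    have hp2 : (1 : ℝ) ≤ (p : ℝ) + 2 := by have : (0:ℝ) ≤ (p:ℝ) := Nat.cast_nonneg p; linarith
    nlinarith [key, hF2, pow_pos hb0 (p + 3)]

lemma tendsto_inv_sqrtA (hκ : 0 < κ) :
    Tendsto (fun N : ℕ => 1 / Real.sqrt ((N : ℝ) + κ)) atTop (nhds 0) := by
  have h1 : Tendsto (fun N : ℕ => (N : ℝ) + κ) atTop atTop :=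
    tendsto_atTop_add_const_right _ κ tendsto_natCast_atTop_atTop
  have h2 : Tendsto Real.sqrt atTop atTop := by
    apply tendsto_atTop_atTop_of_monotone (fun a b h => Real.sqrt_le_sqrt h)
    intro b
    exact ⟨b ^ 2, by rw [Real.sqrt_sq_eq_abs]; exact le_abs_self b⟩
  have h3 := (h2.comp h1).inv_tendsto_atTop
  exact h3.congr (fun N => by simp [Function.comp, one_div])

lemma Elim (hl : 1 ≤ l) (hκ : 0 < κ) (p j : ℕ) (hpj : p + 2 = 2 * (j + 1)) :
    Tendsto (fun N : ℕ => Ff l κ N p / ((N : ℝ) + κ) ^ (j + 1)) atTop (nhds 0) := by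
  obtain ⟨C, hC, hbound⟩ := (growth_pair hl hκ p).1
  apply squeeze_zero' (g := fun N : ℕ => C * (1 / Real.sqrt ((N : ℝ) + κ)))
  · filter_upwards [eventually_atTop.mpr ⟨l, fun N hN => hN⟩] with N hN
    exact div_nonneg (F_nonneg hκ hN p) (pow_nonneg (Apos hκ N).le _)
  · filter_upwards [eventually_atTop.mpr ⟨l, fun N hN => hN⟩] with N hN
    set b := Real.sqrt ((N : ℝ) + κ) with hb
    have hb1 : 1 ≤ b := sqrtA_one_le hl hκ hN
    have hb0 : 0 < b := lt_of_lt_of_le one_pos hb1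
    have hbsq : b ^ 2 = (N : ℝ) + κ := sqrtA_sq hκ N
    have hApow : ((N : ℝ) + κ) ^ (j + 1) = b ^ (p + 2) := by
      rw [← hbsq, ← pow_mul, ← hpj]
    rw [hApow]
    calc Ff l κ N p / b ^ (p + 2) ≤ C * b ^ (p + 1) / b ^ (p + 2) :=
          div_le_div_of_nonneg_right (hbound N hN) (pow_pos hb0 _).le
      _ = C * (1 / b) := by
          have hbne : b ≠ 0 := ne_of_gt hb0
          field_simp
          ring
  · have := (tendsto_inv_sqrtA (κ := κ) hκ).const_mul C
    simpa using this
end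

section
variable {l : ℕ} {κ : ℝ}

lemma prodOdd_pos (j : ℕ) : 0 < ∏ i ∈ range j, (2 * (i : ℝ) + 1) := by
  apply Finset.prod_pos
  intro i _
  positivity

lemma limitL (hl : 1 ≤ l) (hκ : 0 < κ) (j : ℕ) :
    Tendsto (fun N : ℕ => Ff l κ N (2 * j + 1) / ((N : ℝ) + κ) ^ (j + 1)) atTop
      (nhds (1 / ∏ i ∈ range (j + 1), (2 * (i : ℝ) + 1))) := by
  induction j with
  | zero =>
    have hE := Elim hl hκ 0 0 (by norm_num)
    have hT : Tendsto (fun N : ℕ => 1 - ((l : ℝ) + κ - 1) * (Ff l κ N 0 / ((N : ℝ) + κ) ^ (0 + 1)))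
        atTop (nhds (1 - ((l : ℝ) + κ - 1) * 0)) :=
      tendsto_const_nhds.sub (tendsto_const_nhds.mul hE)
    have heq : (fun N : ℕ => 1 - ((l : ℝ) + κ - 1) * (Ff l κ N 0 / ((N : ℝ) + κ) ^ (0 + 1)))
        =ᶠ[atTop] (fun N : ℕ => Ff l κ N (2 * 0 + 1) / ((N : ℝ) + κ) ^ (0 + 1)) := by
      filter_upwards [eventually_atTop.mpr ⟨l, fun N hN => hN⟩] with N hN
      have hA := Apos hκ N
      have h0 := REC0 hκ hN
      have hAne : ((N : ℝ) + κ) ≠ 0 := ne_of_gt hA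
      show 1 - ((l : ℝ) + κ - 1) * (Ff l κ N 0 / ((N : ℝ) + κ) ^ (0 + 1))
          = Ff l κ N (2 * 0 + 1) / ((N : ℝ) + κ) ^ (0 + 1)
      rw [pow_one]
      field_simp
      linarith [h0]
    have := hT.congr' heq
    convert this using 2
    simp
  | succ j ih =>
    have hE := Elim hl hκ (2 * j + 2) (j + 1) (by ring)
    set Pj := ∏ i ∈ range (j + 1), (2 * (i : ℝ) + 1) with hPj
    have hPjpos := prodOdd_pos (j + 1)
    rw [← hPj] at hPjpos
    have hT : Tendsto (fun N : ℕ =>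
        (Ff l κ N (2 * j + 1) / ((N : ℝ) + κ) ^ (j + 1)
          - ((l : ℝ) + κ - (2 * (j : ℝ) + 3)) * (Ff l κ N (2 * j + 2) / ((N : ℝ) + κ) ^ (j + 2)))
          / (2 * (j : ℝ) + 3))
        atTop (nhds ((1 / Pj - ((l : ℝ) + κ - (2 * (j : ℝ) + 3)) * 0) / (2 * (j : ℝ) + 3))) :=
      (ih.sub (tendsto_const_nhds.mul hE)).div_const _
    have heq : (fun N : ℕ =>
        (Ff l κ N (2 * j + 1) / ((N : ℝ) + κ) ^ (j + 1)
          - ((l : ℝ) + κ - (2 * (j : ℝ) + 3)) * (Ff l κ N (2 * j + 2) / ((N : ℝ) + κ) ^ (j + 2)))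
          / (2 * (j : ℝ) + 3))
        =ᶠ[atTop] (fun N : ℕ => Ff l κ N (2 * (j + 1) + 1) / ((N : ℝ) + κ) ^ (j + 1 + 1)) := by
      filter_upwards [eventually_atTop.mpr ⟨l, fun N hN => hN⟩] with N hN
      have hA := Apos hκ N
      have hAne : ((N : ℝ) + κ) ≠ 0 := ne_of_gt hA
      have hApowne : ((N : ℝ) + κ) ^ (j + 1) ≠ 0 := pow_ne_zero _ hAne
      have hrec := REC hκ hN (2 * j + 1)
      have hq2 : ((2 * j + 1 : ℕ) : ℝ) + 2 = 2 * (j : ℝ) + 3 := by push_cast; ring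
      have e1 : 2 * j + 1 + 2 = 2 * (j + 1) + 1 := by omega
      have e2 : 2 * j + 1 + 1 = 2 * j + 2 := by omega
      rw [hq2, e1, e2] at hrec
      show (Ff l κ N (2 * j + 1) / ((N : ℝ) + κ) ^ (j + 1)
          - ((l : ℝ) + κ - (2 * (j : ℝ) + 3)) * (Ff l κ N (2 * j + 2) / ((N : ℝ) + κ) ^ (j + 2)))
          / (2 * (j : ℝ) + 3)
          = Ff l κ N (2 * (j + 1) + 1) / ((N : ℝ) + κ) ^ (j + 1 + 1)
      have h3 : (0 : ℝ) < 2 * (j : ℝ) + 3 := by positivity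
      have hpow2 : ((N : ℝ) + κ) ^ (j + 2) = ((N : ℝ) + κ) ^ (j + 1) * ((N : ℝ) + κ) := by
        rw [pow_succ]
      have hZ : Ff l κ N (2 * (j + 1) + 1)
          = (((N : ℝ) + κ) * Ff l κ N (2 * j + 1)
              - ((l : ℝ) + κ - (2 * (j : ℝ) + 3)) * Ff l κ N (2 * j + 2)) / (2 * (j : ℝ) + 3) := by
        rw [eq_div_iff (ne_of_gt h3)]
        linarith [hrec]
      rw [hZ, show j + 1 + 1 = j + 2 by omega, hpow2]
      field_simp
    have := hT.congr' heq
    convert this using 2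
    rw [Finset.prod_range_succ, ← hPj]
    rw [mul_zero, sub_zero]
    rw [div_div]
    congr 1
    push_cast
    ring
end

theorem stmt6 (l : ℕ) (hl : 1 ≤ l) (κ : ℝ) (hκ : 0 < κ) :
    Tendsto (fun N : ℕ =>
        ∑' k : Fin (2 * l - 1) → ℕ,
          (((∑ i, k i : ℕ) + l + κ) / ((N : ℝ) + κ) ^ ((∑ i, k i) + l) *
            ∏ j ∈ Finset.range (∑ i, k i), ((N : ℝ) - l - j)))
      atTop
      (nhds (1 / ∏ i ∈ Finset.range (l - 1), (2 * (i : ℝ) + 1))) := by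
  obtain ⟨m, rfl⟩ : ∃ m, l = m + 1 := ⟨l - 1, by omega⟩
  rw [show 2 * (m + 1) - 1 = 2 * m + 1 from by omega,
    show m + 1 - 1 = m from by omega]
  have key : ∀ N : ℕ, m + 1 ≤ N →
      (∑' k : Fin (2 * m + 1) → ℕ,
          (((∑ i, k i : ℕ) : ℝ) + ((m + 1 : ℕ) : ℝ) + κ) / ((N : ℝ) + κ) ^ ((∑ i, k i) + (m + 1)) *
            ∏ j ∈ Finset.range (∑ i, k i), ((N : ℝ) - ((m + 1 : ℕ) : ℝ) - j))
        = (∑ s ∈ range (N + 1), ((s + 2 * m).choose (2 * m) : ℝ)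
            * ((((s : ℕ) : ℝ) + ((m + 1 : ℕ) : ℝ) + κ) * Vf (m + 1) κ N s))
          / ((N : ℝ) + κ) ^ (m + 1) := by
    intro N hN
    have hA := Apos hκ N
    have hAne : ((N : ℝ) + κ) ≠ 0 := ne_of_gt hA
    set f : ℕ → ℝ := fun s => (((s : ℕ) : ℝ) + ((m + 1 : ℕ) : ℝ) + κ)
        / ((N : ℝ) + κ) ^ (s + (m + 1)) *
        ∏ j ∈ Finset.range s, ((N : ℝ) - ((m + 1 : ℕ) : ℝ) - j) with hfdef
    have hf0 : ∀ s, N < s → f s = 0 := by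
      intro s hs
      have hz : ∏ j ∈ Finset.range s, ((N : ℝ) - ((m + 1 : ℕ) : ℝ) - j) = 0 := by
        apply Finset.prod_eq_zero (Finset.mem_range.mpr (show N - (m + 1) < s by omega))
        rw [Nat.cast_sub hN]
        ring
      rw [hfdef]
      simp only [hz, mul_zero]
    rw [sb_aux (2 * m) N f hf0, Finset.sum_div]
    apply Finset.sum_congr rfl
    intro s _
    have hVf : Vf (m + 1) κ N s
        = (∏ j ∈ range s, ((N : ℝ) - ((m + 1 : ℕ) : ℝ) - j)) / ((N : ℝ) + κ) ^ s := by
      rw [Vf_def, Finset.prod_div_distrib, Finset.prod_const, Finset.card_range]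
    rw [hVf, hfdef]
    beta_reduce
    rw [pow_add]
    field_simp
  rcases m with _ | m'
  · -- l = 1 case
    have hconst : Tendsto (fun _ : ℕ => (1 : ℝ)) atTop
        (nhds (1 / ∏ i ∈ range 0, (2 * (i : ℝ) + 1))) := by
      simpa using tendsto_const_nhds
    refine Tendsto.congr' ?_ hconst
    filter_upwards [eventually_atTop.mpr ⟨1, fun N h => h⟩] with N hN
    rw [key N hN]
    have h1 : ∑ s ∈ range (N + 1), ((s + 2 * 0).choose (2 * 0) : ℝ)
        * ((((s : ℕ) : ℝ) + ((0 + 1 : ℕ) : ℝ) + κ) * Vf (0 + 1) κ N s)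
        = ∑ s ∈ range (N + 1), ((s : ℝ) + (0 + 1 : ℕ) + κ) * Vf (0 + 1) κ N s := by
      apply Finset.sum_congr rfl
      intro s _
      norm_num
    rw [h1, M0 hκ hN, pow_one, div_self (ne_of_gt (Apos hκ N))]
  · -- l = m' + 2 case
    have hlim := limitL (l := m' + 1 + 1) (by omega) hκ m'
    refine Tendsto.congr' ?_ hlim
    filter_upwards [eventually_atTop.mpr ⟨m' + 1 + 1, fun N h => h⟩] with N hN
    rw [key N hN]
    have h1 : ∑ s ∈ range (N + 1), ((s + 2 * (m' + 1)).choose (2 * (m' + 1)) : ℝ)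
        * ((((s : ℕ) : ℝ) + ((m' + 1 + 1 : ℕ) : ℝ) + κ) * Vf (m' + 1 + 1) κ N s)
        = ∑ s ∈ range (N + 1), ((s + (2 * m' + 1) + 1).choose ((2 * m' + 1) + 1) : ℝ)
        * ((((s : ℕ) : ℝ) + ((m' + 1 + 1 : ℕ) : ℝ) + κ) * Vf (m' + 1 + 1) κ N s) := by
      apply Finset.sum_congr rfl
      intro s _
      congr 2 <;> omega
    rw [h1, M hκ hN (2 * m' + 1)]
    have hA := Apos hκ N
    have hAne : ((N : ℝ) + κ) ≠ 0 := ne_of_gt hA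
    have hpow : ((N : ℝ) + κ) ^ (m' + 1 + 1) = ((N : ℝ) + κ) ^ (m' + 1) * ((N : ℝ) + κ) := pow_succ _ _
    rw [hpow]
    have hApne : ((N : ℝ) + κ) ^ (m' + 1) ≠ 0 := pow_ne_zero _ hAne
    field_simp
end

section
/- Fix integers l ≥ 1 and 1 ≤ r ≤ l, a real c > 0, and set d := 2l - r. Fix t = (t_1, …, t_d) ∈ ℝ_{≥0}^d, put σ := Σ_{i=1}^d t_i, and for each N set κ_N := c√N and Σ_N := Σ_{i=1}^d ⌊t_i √N⌋. Then lim_{N→∞} N^{d/2} · κ_N^{r-1} (l + Σ_N + κ_N) / (N + κ_N)^{l + Σ_N} · ∏_{i=0}^{Σ_N - 1}(N - l - i) = c^{r-1} (σ + c) · exp(−σ²/2 − cσ), where an empty product equals 1. -/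
open Filter Finset
set_option maxHeartbeats 1000000

lemma gauss_real (m : ℕ) : ∑ j ∈ Finset.range m, (j:ℝ) = m*(m-1)/2 := by
  induction m with
  | zero => simp
  | succ n ih => rw [Finset.sum_range_succ, ih]; push_cast; ring

lemma sum_affine (m : ℕ) (a : ℝ) : ∑ j ∈ Finset.range m, (a + j) = m*a + m*(m-1)/2 := by
  rw [Finset.sum_add_distrib, Finset.sum_const, gauss_real]
  simp [nsmul_eq_mul]

lemma sqrtN_atTop : Tendsto (fun N : ℕ => Real.sqrt N) atTop atTop := by
  have h := (tendsto_rpow_atTop (y := 1/2) (by norm_num)).comp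
    (tendsto_natCast_atTop_atTop (R := ℝ))
  refine h.congr fun N => ?_
  simp [Function.comp, Real.rpow_natCast, Real.sqrt_eq_rpow]

lemma epsN : Tendsto (fun N : ℕ => 1 / Real.sqrt N) atTop (nhds 0) := by
  simpa [one_div, Pi.inv_def] using sqrtN_atTop.inv_tendsto_atTop

lemma floor_div_sqrt (a : ℝ) (ha : 0 ≤ a) :
    Tendsto (fun N : ℕ => (⌊a * Real.sqrt N⌋₊ : ℝ) / Real.sqrt N) atTop (nhds a) := by
  apply tendsto_of_tendsto_of_tendsto_of_le_of_le'
      (g := fun N : ℕ => a - 1 / Real.sqrt N) (h := fun _ : ℕ => a)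
  · simpa using (tendsto_const_nhds (x := a)).sub epsN
  · exact tendsto_const_nhds
  · filter_upwards [eventually_ge_atTop 1] with N hN
    have hq : 0 < Real.sqrt N := Real.sqrt_pos.2 (by exact_mod_cast hN)
    have h1 : a * Real.sqrt N - 1 ≤ (⌊a * Real.sqrt N⌋₊ : ℝ) :=
      (Nat.sub_one_lt_floor _).le
    rw [sub_le_iff_le_add, ← add_div, le_div_iff₀ hq]
    nlinarith [h1]
  · filter_upwards [eventually_ge_atTop 1] with N hN
    have hq : 0 < Real.sqrt N := Real.sqrt_pos.2 (by exact_mod_cast hN)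
    rw [div_le_iff₀ hq]
    exact le_trans (Nat.floor_le (by positivity)) (by nlinarith)

lemma sum_floor_div_sqrt {d : ℕ} (t : Fin d → ℝ) (ht : ∀ i, 0 ≤ t i) :
    Tendsto (fun N : ℕ => ((∑ i, ⌊t i * Real.sqrt N⌋₊ : ℕ) : ℝ) / Real.sqrt N)
      atTop (nhds (∑ i, t i)) := by
  have h := tendsto_finset_sum Finset.univ (fun i (_ : i ∈ Finset.univ) => floor_div_sqrt (t i) (ht i))
  refine h.congr fun N => ?_
  push_cast
  rw [Finset.sum_div]

theorem stmt7 (l r : ℕ) (hl : 1 ≤ l) (hr1 : 1 ≤ r) (hrl : r ≤ l)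
    (c : ℝ) (hc : 0 < c)
    (t : Fin (2 * l - r) → ℝ) (ht : ∀ i, 0 ≤ t i) :
    Tendsto (fun N : ℕ =>
        Real.sqrt N ^ (2 * l - r) *
          ((c * Real.sqrt N) ^ (r - 1) *
            (((l : ℝ) + (∑ i, ⌊t i * Real.sqrt N⌋₊ : ℕ) + c * Real.sqrt N) /
              ((N : ℝ) + c * Real.sqrt N) ^ (l + ∑ i, ⌊t i * Real.sqrt N⌋₊)) *
            ∏ j ∈ Finset.range (∑ i, ⌊t i * Real.sqrt N⌋₊), ((N : ℝ) - l - j)))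
      atTop
      (nhds (c ^ (r - 1) * ((∑ i, t i) + c) *
        Real.exp (-(∑ i, t i) ^ 2 / 2 - c * ∑ i, t i))) := by
  set S : ℝ := ∑ i, t i with hSdef
  have hS : 0 ≤ S := Finset.sum_nonneg fun i _ => ht i
  set σ : ℕ → ℕ := fun N => ∑ i, ⌊t i * Real.sqrt N⌋₊ with hσdef
  set q : ℕ → ℝ := fun N => Real.sqrt N with hqdef
  have hs : Tendsto (fun N => (σ N : ℝ) / q N) atTop (nhds S) := sum_floor_div_sqrt t ht
  have hε : Tendsto (fun N => 1 / q N) atTop (nhds 0) := epsN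
  -- eventual good set
  have hEv : ∀ᶠ N : ℕ in atTop, 1 ≤ N ∧ (l : ℝ) + σ N ≤ (N : ℝ) / 2 := by
    have h1 : ∀ᶠ N : ℕ in atTop, (σ N : ℝ) / q N < S + 1 :=
      hs.eventually (gt_mem_nhds (lt_add_one S))
    have h2 : Tendsto (fun N : ℕ => (2 * l : ℝ) / N + 2 * (S + 1) / q N) atTop (nhds 0) := by
      have ha : Tendsto (fun N : ℕ => (2 * l : ℝ) / N) atTop (nhds 0) :=
        tendsto_const_div_atTop_nhds_zero_nat _
      have hb : Tendsto (fun N : ℕ => 2 * (S + 1) / q N) atTop (nhds 0) := by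
        simpa [div_eq_mul_inv] using hε.const_mul (2 * (S + 1))
      simpa using ha.add hb
    have h3 : ∀ᶠ N : ℕ in atTop, (2 * l : ℝ) / N + 2 * (S + 1) / q N ≤ 1 :=
      h2.eventually (eventually_le_nhds (by norm_num))
    filter_upwards [h1, h3, eventually_ge_atTop 1] with N hN1 hN3 hN4
    refine ⟨hN4, ?_⟩
    have hq : 0 < q N := Real.sqrt_pos.2 (by exact_mod_cast hN4)
    have hNpos : (0 : ℝ) < N := by exact_mod_cast hN4
    have hqq : q N * q N = (N : ℝ) := Real.mul_self_sqrt (Nat.cast_nonneg N)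
    have hσle : (σ N : ℝ) ≤ (S + 1) * q N := by
      rw [div_lt_iff₀ hq] at hN1; linarith
    rw [div_add_div _ _ (ne_of_gt hNpos) (ne_of_gt hq), div_le_one (by positivity)] at hN3
    nlinarith [hσle, hN3, hqq, hq, hNpos]
  set u : ℕ → ℝ := fun N => ∑ j ∈ Finset.range (σ N),
      ((l : ℝ) + j + c * q N) / ((N : ℝ) + c * q N) with hudef
  set L : ℕ → ℝ := fun N => ∑ j ∈ Finset.range (σ N),
      Real.log (((N : ℝ) - l - j) / ((N : ℝ) + c * q N)) with hLdef
  set g : ℕ → ℝ := fun N =>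
      (σ N : ℝ) * ((l : ℝ) + σ N + c * q N) ^ 2 * 2 / (N : ℝ) ^ 2 with hgdef
  set U : ℝ := S ^ 2 / 2 + c * S with hUdef
  -- limit of u
  have hu : Tendsto u atTop (nhds U) := by
    have hw : Tendsto (fun N => ((σ N : ℝ) / q N * ((l : ℝ) * (1 / q N) + c) +
        (σ N : ℝ) / q N * ((σ N : ℝ) / q N - 1 / q N) / 2) / (1 + c * (1 / q N)))
        atTop (nhds ((S * ((l : ℝ) * 0 + c) + S * (S - 0) / 2) / (1 + c * 0))) := by
      refine Tendsto.div ?_ ?_ (by norm_num)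
      · exact (hs.mul ((hε.const_mul (l : ℝ)).add_const c)).add
          ((hs.mul (hs.sub hε)).div_const 2)
      · exact tendsto_const_nhds.add (hε.const_mul c)
    rw [show (S * ((l : ℝ) * 0 + c) + S * (S - 0) / 2) / (1 + c * 0) = U by
      rw [hUdef]; ring] at hw
    refine hw.congr' ?_
    filter_upwards [eventually_ge_atTop 1] with N hN1
    have hq : 0 < q N := Real.sqrt_pos.2 (by exact_mod_cast hN1)
    have hqq : q N * q N = (N : ℝ) := Real.mul_self_sqrt (Nat.cast_nonneg N)
    have hD : (0 : ℝ) < (N : ℝ) + c * q N := by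
      have : (0:ℝ) < (N:ℝ) := by exact_mod_cast hN1
      positivity
    have hclosed : u N = ((σ N : ℝ) * ((l : ℝ) + c * q N) +
        (σ N : ℝ) * ((σ N : ℝ) - 1) / 2) / ((N : ℝ) + c * q N) := by
      show (∑ j ∈ Finset.range (σ N), ((l : ℝ) + j + c * q N) / ((N : ℝ) + c * q N)) = _
      rw [← Finset.sum_div]
      congr 1
      rw [show (∑ j ∈ Finset.range (σ N), ((l : ℝ) + j + c * q N))
          = ∑ j ∈ Finset.range (σ N), (((l : ℝ) + c * q N) + j) from
        Finset.sum_congr rfl fun j _ => by ring, sum_affine]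
    rw [hclosed, ← hqq]
    field_simp
  
  -- limit of g
  have hg : Tendsto g atTop (nhds 0) := by
    have hw : Tendsto (fun N => (σ N : ℝ) / q N *
        ((l : ℝ) * (1 / q N) + (σ N : ℝ) / q N + c) ^ 2 * 2 * (1 / q N))
        atTop (nhds (S * ((l : ℝ) * 0 + S + c) ^ 2 * 2 * 0)) :=
      (((hs.mul ((((hε.const_mul (l : ℝ)).add hs).add_const c).pow 2)).mul_const 2).mul hε)
    rw [show S * ((l : ℝ) * 0 + S + c) ^ 2 * 2 * 0 = 0 by ring] at hw
    refine hw.congr' ?_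
    filter_upwards [eventually_ge_atTop 1] with N hN1
    have hq : 0 < q N := Real.sqrt_pos.2 (by exact_mod_cast hN1)
    have hqq : q N * q N = (N : ℝ) := Real.mul_self_sqrt (Nat.cast_nonneg N)
    show _ = (σ N : ℝ) * ((l : ℝ) + σ N + c * q N) ^ 2 * 2 / (N : ℝ) ^ 2
    rw [← hqq]
    field_simp
  -- squeeze for L
  have hL : Tendsto L atTop (nhds (-U)) := by
    apply tendsto_of_tendsto_of_tendsto_of_le_of_le'
        (g := fun N => -u N - g N) (h := fun N => -u N)
    · simpa using hu.neg.sub hg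
    · exact hu.neg
    · -- lower bound
      filter_upwards [hEv] with N ⟨hN1, hhalf⟩
      have hNpos : (0 : ℝ) < N := by exact_mod_cast hN1
      have hq : 0 < q N := Real.sqrt_pos.2 (by exact_mod_cast hN1)
      have hD : (0 : ℝ) < (N : ℝ) + c * q N := by positivity
      have hNleD : (N : ℝ) ≤ (N : ℝ) + c * q N := by nlinarith
      have hfac : ∀ j ∈ Finset.range (σ N), (N : ℝ) / 2 ≤ (N : ℝ) - l - j := by
        intro j hj
        rw [Finset.mem_range] at hj
        have : (j : ℝ) + 1 ≤ (σ N : ℝ) := by exact_mod_cast hj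
        linarith
      have hterm : ∀ j ∈ Finset.range (σ N),
          ((l : ℝ) + j + c * q N) / ((N : ℝ) - l - j)
            - ((l : ℝ) + j + c * q N) / ((N : ℝ) + c * q N)
          ≤ ((l : ℝ) + σ N + c * q N) ^ 2 * 2 / (N : ℝ) ^ 2 := by
        intro j hj
        have hB : (N : ℝ) / 2 ≤ (N : ℝ) - l - j := hfac j hj
        have hBpos : (0 : ℝ) < (N : ℝ) - l - j := lt_of_lt_of_le (by positivity) hB
        have hApos : (0 : ℝ) < (l : ℝ) + j + c * q N := by positivity
        have hAle : (l : ℝ) + j + c * q N ≤ (l : ℝ) + σ N + c * q N := by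
          rw [Finset.mem_range] at hj
          have : (j : ℝ) ≤ (σ N : ℝ) := by exact_mod_cast hj.le
          linarith
        have heq : ((l : ℝ) + j + c * q N) / ((N : ℝ) - l - j)
            - ((l : ℝ) + j + c * q N) / ((N : ℝ) + c * q N)
            = ((l : ℝ) + j + c * q N) ^ 2 / (((N : ℝ) - l - j) * ((N : ℝ) + c * q N)) := by
          field_simp
          ring
        rw [heq]
        calc ((l : ℝ) + j + c * q N) ^ 2 / (((N : ℝ) - l - j) * ((N : ℝ) + c * q N))
            ≤ ((l : ℝ) + σ N + c * q N) ^ 2 / (((N : ℝ) / 2) * (N : ℝ)) := by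
              apply div_le_div₀ (by positivity)
                (pow_le_pow_left₀ hApos.le hAle 2) (by positivity)
              exact mul_le_mul hB hNleD hNpos.le hBpos.le
          _ = ((l : ℝ) + σ N + c * q N) ^ 2 * 2 / (N : ℝ) ^ 2 := by
              field_simp
      have hsumdiff : (∑ j ∈ Finset.range (σ N), ((l : ℝ) + j + c * q N) / ((N : ℝ) - l - j))
          - u N ≤ g N := by
        have h1 := Finset.sum_le_sum hterm
        rw [Finset.sum_sub_distrib, Finset.sum_const, Finset.card_range, nsmul_eq_mul] at h1
        have : (σ N : ℝ) * (((l : ℝ) + σ N + c * q N) ^ 2 * 2 / (N : ℝ) ^ 2) = g N := by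
          show _ = (σ N : ℝ) * ((l : ℝ) + σ N + c * q N) ^ 2 * 2 / (N : ℝ) ^ 2
          ring
        calc (∑ j ∈ Finset.range (σ N), ((l : ℝ) + j + c * q N) / ((N : ℝ) - l - j)) - u N
            ≤ (σ N : ℝ) * (((l : ℝ) + σ N + c * q N) ^ 2 * 2 / (N : ℝ) ^ 2) := h1
          _ = g N := this
      have hlog : ∀ j ∈ Finset.range (σ N),
          -(((l : ℝ) + j + c * q N) / ((N : ℝ) - l - j))
            ≤ Real.log (((N : ℝ) - l - j) / ((N : ℝ) + c * q N)) := by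
        intro j hj
        have hB : (N : ℝ) / 2 ≤ (N : ℝ) - l - j := hfac j hj
        have hBpos : (0 : ℝ) < (N : ℝ) - l - j := lt_of_lt_of_le (by positivity) hB
        have h := Real.log_le_sub_one_of_pos
          (x := ((N : ℝ) + c * q N) / ((N : ℝ) - l - j)) (by positivity)
        rw [Real.log_div hD.ne' hBpos.ne'] at h
        rw [Real.log_div hBpos.ne' hD.ne']
        have hDB : ((N : ℝ) + c * q N) / ((N : ℝ) - l - j) - 1
            = ((l : ℝ) + j + c * q N) / ((N : ℝ) - l - j) := by
          field_simp
          ring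
        rw [hDB] at h
        linarith
      have h2 := Finset.sum_le_sum hlog
      rw [Finset.sum_neg_distrib] at h2
      have : -u N - g N ≤ -(∑ j ∈ Finset.range (σ N),
          ((l : ℝ) + j + c * q N) / ((N : ℝ) - l - j)) := by linarith
      exact le_trans this h2
    · -- upper bound
      filter_upwards [hEv] with N ⟨hN1, hhalf⟩
      have hNpos : (0 : ℝ) < N := by exact_mod_cast hN1
      have hq : 0 < q N := Real.sqrt_pos.2 (by exact_mod_cast hN1)
      have hD : (0 : ℝ) < (N : ℝ) + c * q N := by positivity
      have hfac : ∀ j ∈ Finset.range (σ N), (N : ℝ) / 2 ≤ (N : ℝ) - l - j := by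
        intro j hj
        rw [Finset.mem_range] at hj
        have : (j : ℝ) + 1 ≤ (σ N : ℝ) := by exact_mod_cast hj
        linarith
      rw [show -u N = ∑ j ∈ Finset.range (σ N),
          -(((l : ℝ) + j + c * q N) / ((N : ℝ) + c * q N)) from
        (Finset.sum_neg_distrib (s := Finset.range (σ N))
          (f := fun j => ((l : ℝ) + j + c * q N) / ((N : ℝ) + c * q N))).symm]
      apply Finset.sum_le_sum
      intro j hj
      have hBpos : (0 : ℝ) < (N : ℝ) - l - j := lt_of_lt_of_le (by positivity) (hfac j hj)
      have h := Real.log_le_sub_one_of_pos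
        (x := ((N : ℝ) - l - j) / ((N : ℝ) + c * q N)) (by positivity)
      have hBD : ((N : ℝ) - l - j) / ((N : ℝ) + c * q N) - 1
          = -(((l : ℝ) + j + c * q N) / ((N : ℝ) + c * q N)) := by
        field_simp
        ring
      rw [hBD] at h
      exact h
  -- limit of the product
  have hC : Tendsto (fun N => ∏ j ∈ Finset.range (σ N),
      (((N : ℝ) - l - j) / ((N : ℝ) + c * q N))) atTop (nhds (Real.exp (-U))) := by
    have := (Real.continuous_exp.tendsto _).comp hL
    refine this.congr' ?_
    filter_upwards [hEv] with N ⟨hN1, hhalf⟩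
    have hNpos : (0 : ℝ) < N := by exact_mod_cast hN1
    have hq : 0 < q N := Real.sqrt_pos.2 (by exact_mod_cast hN1)
    have hD : (0 : ℝ) < (N : ℝ) + c * q N := by positivity
    have hfac : ∀ j ∈ Finset.range (σ N), (N : ℝ) / 2 ≤ (N : ℝ) - l - j := by
      intro j hj
      rw [Finset.mem_range] at hj
      have : (j : ℝ) + 1 ≤ (σ N : ℝ) := by exact_mod_cast hj
      linarith
    show Real.exp (L N) = _
    calc Real.exp (L N) = ∏ j ∈ Finset.range (σ N),
          Real.exp (Real.log (((N : ℝ) - l - j) / ((N : ℝ) + c * q N))) :=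
        Real.exp_sum _ _
      _ = ∏ j ∈ Finset.range (σ N), (((N : ℝ) - l - j) / ((N : ℝ) + c * q N)) := by
        refine Finset.prod_congr rfl fun j hj => ?_
        have hBpos : (0 : ℝ) < (N : ℝ) - l - j := lt_of_lt_of_le (by positivity) (hfac j hj)
        exact Real.exp_log (by positivity)
  -- final assembly
  have hmid : Tendsto (fun N => ((l : ℝ) + σ N + c * q N) / q N) atTop (nhds (S + c)) := by
    have hw := ((hε.const_mul (l : ℝ)).add hs).add_const c
    rw [show (l : ℝ) * 0 + S + c = S + c by ring] at hw
    refine hw.congr' ?_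
    filter_upwards [eventually_ge_atTop 1] with N hN1
    have hq : 0 < q N := Real.sqrt_pos.2 (by exact_mod_cast hN1)
    field_simp
  have hpow : Tendsto (fun N : ℕ => ((N : ℝ) / ((N : ℝ) + c * q N)) ^ l) atTop (nhds 1) := by
    have hbase : Tendsto (fun N : ℕ => 1 / (1 + c * (1 / q N))) atTop (nhds 1) := by
      have hw := (tendsto_const_nhds (x := (1 : ℝ))).div
        ((tendsto_const_nhds (x := (1 : ℝ))).add (hε.const_mul c)) (by norm_num)
      rw [show (1 : ℝ) / (1 + c * 0) = 1 by norm_num] at hw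
      exact hw
    have hw := hbase.pow l
    rw [one_pow] at hw
    refine hw.congr' ?_
    filter_upwards [eventually_ge_atTop 1] with N hN1
    have hq : 0 < q N := Real.sqrt_pos.2 (by exact_mod_cast hN1)
    have hqq : q N * q N = (N : ℝ) := Real.mul_self_sqrt (Nat.cast_nonneg N)
    have hD : (0 : ℝ) < (N : ℝ) + c * q N := by
      have : (0:ℝ) < (N:ℝ) := by exact_mod_cast hN1
      positivity
    congr 1
    rw [← hqq]
    rw [show 1 + c * (1 / q N) = (q N + c) / q N by field_simp,
      one_div_div, div_eq_div_iff (by nlinarith) (by nlinarith)]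
    ring
  have hG : Tendsto (fun N : ℕ => c ^ (r - 1) * (((N : ℝ) / ((N : ℝ) + c * q N)) ^ l *
      ((((l : ℝ) + σ N + c * q N) / q N) *
        ∏ j ∈ Finset.range (σ N), (((N : ℝ) - l - j) / ((N : ℝ) + c * q N)))))
      atTop (nhds (c ^ (r - 1) * (1 * ((S + c) * Real.exp (-U))))) :=
    tendsto_const_nhds.mul (hpow.mul (hmid.mul hC))
  rw [show c ^ (r - 1) * (1 * ((S + c) * Real.exp (-U)))
      = c ^ (r - 1) * (S + c) * Real.exp (-S ^ 2 / 2 - c * S) by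
    rw [show -U = -S ^ 2 / 2 - c * S by rw [hUdef]; ring]; ring] at hG
  show Tendsto (fun N : ℕ =>
      q N ^ (2 * l - r) * ((c * q N) ^ (r - 1) *
        (((l : ℝ) + (σ N : ℝ) + c * q N) / ((N : ℝ) + c * q N) ^ (l + σ N)) *
        ∏ j ∈ Finset.range (σ N), ((N : ℝ) - l - j))) atTop
      (nhds (c ^ (r - 1) * (S + c) * Real.exp (-S ^ 2 / 2 - c * S)))
  refine hG.congr' ?_
  filter_upwards [eventually_ge_atTop 1] with N hN1
  have hq : 0 < q N := Real.sqrt_pos.2 (by exact_mod_cast hN1)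
  have hqq : q N * q N = (N : ℝ) := Real.mul_self_sqrt (Nat.cast_nonneg N)
  have hNpos : (0 : ℝ) < N := by exact_mod_cast hN1
  have hD : (0 : ℝ) < (N : ℝ) + c * q N := by positivity
  have hDl : (0 : ℝ) < ((N : ℝ) + c * q N) ^ l := by positivity
  have hDσ : (0 : ℝ) < ((N : ℝ) + c * q N) ^ (σ N) := by positivity
  have hprodq : ∏ j ∈ Finset.range (σ N), (((N : ℝ) - l - j) / ((N : ℝ) + c * q N))
      = (∏ j ∈ Finset.range (σ N), ((N : ℝ) - l - j)) / ((N : ℝ) + c * q N) ^ (σ N) := by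
    rw [Finset.prod_div_distrib, Finset.prod_const, Finset.card_range]
  have e3 : q N ^ (2 * l - r) * q N ^ (r - 1) * q N = (N : ℝ) ^ l := by
    rw [← pow_add, ← pow_succ, show 2 * l - r + (r - 1) + 1 = 2 * l by omega,
      pow_mul, Real.sq_sqrt (Nat.cast_nonneg N)]
  rw [hprodq, pow_add, mul_pow, div_pow]
  set P : ℝ := ∏ j ∈ Finset.range (σ N), ((N : ℝ) - l - j) with hPdef
  field_simp
  rw [← e3]
  ring
end
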